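/- arXiv:2104.11268 — 4 statements merged into one kernel-verified Lean document; each statement's English description precedes it below -/
import Mathlib

section
/- Let K ≥ 1, let T : Fin K → Fin K → Fin K → ℝ be a fully symmetric tensor, and for a ∈ ℝ^K let 𝒫(a) be the K×K matrix with entries 𝒫(a)_{ℓ,m} = Σ_k a_k · T k ℓ m. Let g > 0 and let ĥ, q̂ˣ, q̂ʸ ∈ ℝ^K be such that 𝒫(ĥ) is positive definite. Set û = 𝒫(ĥ)⁻¹ q̂ˣ, v̂ = 𝒫(ĥ)⁻¹ q̂ʸ, X = 𝒫(q̂ˣ)𝒫(ĥ)⁻¹, Y = 𝒫(q̂ʸ)𝒫(ĥ)⁻¹, and define the 3K×3K block matrices J_F = [[0, I, 0], [g𝒫(ĥ) − X𝒫(û), X + 𝒫(û), 0], [−X𝒫(v̂), 𝒫(v̂), X]] and J_G = [[0, 0, I], [−Y𝒫(û), Y, 𝒫(û)], [g𝒫(ĥ) − Y𝒫(v̂), 0, Y + 𝒫(v̂)]]. Then for every n_x, n_y ∈ ℝ with n_x² + n_y² = 1, the matrix n_x J_F + n_y J_G is similar over ℝ to a real symmetric matrix; in particular there exist an invertible real matrix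 S and a diagonal real matrix D such that n_x J_F + n_y J_G = S D S⁻¹. -/
open Matrix BigOperators

/-- The Galerkin (triple-product) matrix `𝒫(a)` associated with a coefficient
vector `a` and a tensor `T`: `𝒫(a)_{ℓ,m} = Σ_k a_k · T k ℓ m`. -/
def Pmat (K : ℕ) (T : Fin K → Fin K → Fin K → ℝ) (a : Fin K → ℝ) :
    Matrix (Fin K) (Fin K) ℝ :=
  Matrix.of fun ℓ m => ∑ k, a k * T k ℓ m

/-- Assemble a `3K × 3K` matrix from a `3 × 3` array of `K × K` blocks. -/
def block3 (K : ℕ) (M : Matrix (Fin 3) (Fin 3) (Matrix (Fin K) (Fin K) ℝ)) :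
    Matrix (Fin 3 × Fin K) (Fin 3 × Fin K) ℝ :=
  Matrix.of fun p q => M p.1 q.1 p.2 q.2

lemma block3_mul (K : ℕ) (M N : Matrix (Fin 3) (Fin 3) (Matrix (Fin K) (Fin K) ℝ)) :
    block3 K M * block3 K N = block3 K (M * N) := by
  ext ⟨i, k⟩ ⟨j, l⟩
  simp [block3, Matrix.mul_apply, Fintype.sum_prod_type, Matrix.sum_apply]

lemma block3_transpose (K : ℕ) (M : Matrix (Fin 3) (Fin 3) (Matrix (Fin K) (Fin K) ℝ)) :
    (block3 K M)ᵀ = block3 K (Matrix.of fun i j => (M j i)ᵀ) := by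
  ext ⟨i, k⟩ ⟨j, l⟩; rfl

lemma block3_smul (K : ℕ) (r : ℝ) (M : Matrix (Fin 3) (Fin 3) (Matrix (Fin K) (Fin K) ℝ)) :
    r • block3 K M = block3 K (r • M) := by
  ext ⟨i, k⟩ ⟨j, l⟩; rfl

lemma block3_add (K : ℕ) (M N : Matrix (Fin 3) (Fin 3) (Matrix (Fin K) (Fin K) ℝ)) :
    block3 K M + block3 K N = block3 K (M + N) := by
  ext ⟨i, k⟩ ⟨j, l⟩; rfl

lemma block3_one (K : ℕ) : block3 K 1 = 1 := by
  ext ⟨i, k⟩ ⟨j, l⟩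
  by_cases hij : i = j
  · subst hij
    by_cases hkl : k = l <;>
      simp [block3, Matrix.one_apply, Prod.ext_iff, hkl]
  · simp [block3, Matrix.one_apply, Prod.ext_iff, hij]

set_option maxHeartbeats 2000000 in
theorem sg_swe_hyperbolic_of_posdef
    (K : ℕ) (hK : 1 ≤ K) (T : Fin K → Fin K → Fin K → ℝ)
    (hT1 : ∀ k ℓ m, T k ℓ m = T ℓ k m)
    (hT2 : ∀ k ℓ m, T k ℓ m = T k m ℓ)
    (g : ℝ) (hg : 0 < g)
    (h qx qy : Fin K → ℝ)
    (hpd : (Pmat K T h).PosDef)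
    (u v : Fin K → ℝ)
    (hu : u = (Pmat K T h)⁻¹ *ᵥ qx)
    (hv : v = (Pmat K T h)⁻¹ *ᵥ qy)
    (X Y : Matrix (Fin K) (Fin K) ℝ)
    (hX : X = Pmat K T qx * (Pmat K T h)⁻¹)
    (hY : Y = Pmat K T qy * (Pmat K T h)⁻¹)
    (JF JG : Matrix (Fin 3 × Fin K) (Fin 3 × Fin K) ℝ)
    (hJF : JF = block3 K
      !![(0 : Matrix (Fin K) (Fin K) ℝ), 1, 0;
         g • Pmat K T h - X * Pmat K T u, X + Pmat K T u, 0;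
         -(X * Pmat K T v), Pmat K T v, X])
    (hJG : JG = block3 K
      !![(0 : Matrix (Fin K) (Fin K) ℝ), 0, 1;
         -(Y * Pmat K T u), Y, Pmat K T u;
         g • Pmat K T h - Y * Pmat K T v, 0, Y + Pmat K T v]) :
    ∀ nx ny : ℝ, nx ^ 2 + ny ^ 2 = 1 →
      (∃ S : Matrix (Fin 3 × Fin K) (Fin 3 × Fin K) ℝ,
          IsUnit S.det ∧ (S⁻¹ * (nx • JF + ny • JG) * S).IsSymm) ∧
      (∃ S D : Matrix (Fin 3 × Fin K) (Fin 3 × Fin K) ℝ,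
          IsUnit S.det ∧ D.IsDiag ∧ nx • JF + ny • JG = S * D * S⁻¹) := by
  intro nx ny _hn
  -- notation
  set P : Matrix (Fin K) (Fin K) ℝ := Pmat K T h with hPdef
  set U : Matrix (Fin K) (Fin K) ℝ := Pmat K T u with hUdef
  set V : Matrix (Fin K) (Fin K) ℝ := Pmat K T v with hVdef
  -- symmetry of all Pmat matrices
  have hPsymm : ∀ a : Fin K → ℝ, (Pmat K T a)ᵀ = Pmat K T a := by
    intro a; ext ℓ m
    simp only [Pmat, transpose_apply, Matrix.of_apply]
    exact Finset.sum_congr rfl fun k _ => by rw [hT2]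
  have hdet : IsUnit P.det := hpd.det_pos.ne'.isUnit
  have hPiP : P⁻¹ * P = 1 := Matrix.nonsing_inv_mul P hdet
  have hPPi : P * P⁻¹ = 1 := Matrix.mul_nonsing_inv P hdet
  have hPisym : (P⁻¹)ᵀ = P⁻¹ := by
    rw [Matrix.transpose_nonsing_inv, hPsymm]
  have hUsym : Uᵀ = U := hPsymm u
  have hVsym : Vᵀ = V := hPsymm v
  -- transposes of X and Y
  have hXt : Xᵀ = P⁻¹ * Pmat K T qx := by
    rw [hX, Matrix.transpose_mul, hPisym, hPsymm]
  have hYt : Yᵀ = P⁻¹ * Pmat K T qy := by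
    rw [hY, Matrix.transpose_mul, hPisym, hPsymm]
  have hXb : Xᵀ * P⁻¹ = P⁻¹ * X := by rw [hXt, hX]; simp [mul_assoc]
  have hYb : Yᵀ * P⁻¹ = P⁻¹ * Y := by rw [hYt, hY]; simp [mul_assoc]
  have hPiP2 : ∀ Z : Matrix (Fin K) (Fin K) ℝ, P⁻¹ * (P * Z) = Z := by
    intro Z; rw [← mul_assoc, hPiP, one_mul]
  -- the 3×3 block pictures
  set MF : Matrix (Fin 3) (Fin 3) (Matrix (Fin K) (Fin K) ℝ) :=
    !![(0 : Matrix (Fin K) (Fin K) ℝ), 1, 0;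
       g • P - X * U, X + U, 0;
       -(X * V), V, X] with hMF
  set MG : Matrix (Fin 3) (Fin 3) (Matrix (Fin K) (Fin K) ℝ) :=
    !![(0 : Matrix (Fin K) (Fin K) ℝ), 0, 1;
       -(Y * U), Y, U;
       g • P - Y * V, 0, Y + V] with hMG
  set A : Matrix (Fin 3 × Fin K) (Fin 3 × Fin K) ℝ := nx • JF + ny • JG with hAdef
  have hA : A = block3 K (nx • MF + ny • MG) := by
    rw [hAdef, hJF, hJG, block3_smul, block3_smul, block3_add]
  -- the symmetrizer
  set H3 : Matrix (Fin 3) (Fin 3) (Matrix (Fin K) (Fin K) ℝ) :=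
    !![g • 1 + U * (P⁻¹ * U) + V * (P⁻¹ * V), -(U * P⁻¹), -(V * P⁻¹);
       -(P⁻¹ * U), P⁻¹, 0;
       -(P⁻¹ * V), 0, P⁻¹] with hH3
  set Z0 : Matrix (Fin K) (Fin K) ℝ := P⁻¹ * (nx • X + ny • Y) with hZ0
  set G3 : Matrix (Fin 3) (Fin 3) (Matrix (Fin K) (Fin K) ℝ) :=
    !![U * (Z0 * U) + V * (Z0 * V) - (nx * g) • U - (ny * g) • V,
         (nx * g) • 1 - U * Z0, (ny * g) • 1 - V * Z0;
       (nx * g) • 1 - Z0 * U, Z0, 0;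
       (ny * g) • 1 - Z0 * V, 0, Z0] with hG3
  have key1 : H3 * (nx • MF + ny • MG) = G3 := by
    refine Matrix.ext fun i j => ?_
    fin_cases i <;> fin_cases j <;>
      simp [hH3, hG3, hZ0, hMF, hMG, Matrix.mul_apply, Fin.sum_univ_three]
    all_goals
      simp only [smul_add, smul_sub, mul_add, add_mul, mul_sub, sub_mul,
        Matrix.smul_mul, Matrix.mul_smul, neg_mul, mul_neg, mul_assoc, hPiP, hPiP2,
        Matrix.mul_one, Matrix.one_mul, Matrix.mul_zero, Matrix.zero_mul,
        smul_smul]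
      module
  -- symmetry of the blocks of G3 and H3
  have hZ0sym : Z0ᵀ = Z0 := by
    rw [hZ0, Matrix.transpose_mul, Matrix.transpose_add, Matrix.transpose_smul,
      Matrix.transpose_smul, hPisym, add_mul, Matrix.smul_mul, Matrix.smul_mul,
      hXb, hYb, mul_add, Matrix.mul_smul, Matrix.mul_smul]
  have hGsymm : ∀ i j, (G3 i j)ᵀ = G3 j i := by
    intro i j
    fin_cases i <;> fin_cases j <;>
      simp [hG3, Matrix.transpose_add, Matrix.transpose_sub, Matrix.transpose_smul,
        Matrix.transpose_mul, hUsym, hVsym, hZ0sym, mul_assoc]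
  have hHsymm3 : ∀ i j, (H3 i j)ᵀ = H3 j i := by
    intro i j
    fin_cases i <;> fin_cases j <;>
      simp [hH3, Matrix.transpose_add, Matrix.transpose_smul,
        Matrix.transpose_mul, hUsym, hVsym, hPisym, mul_assoc]
  have hHsym : (block3 K H3)ᵀ = block3 K H3 := by
    rw [block3_transpose]
    exact congrArg _ (Matrix.ext fun i j => hHsymm3 j i)
  have hHA : (block3 K H3 * A)ᵀ = block3 K H3 * A := by
    rw [hA, block3_mul, key1, block3_transpose]
    exact congrArg _ (Matrix.ext fun i j => hGsymm j i)
  -- square roots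
  have hpdi : (P⁻¹).PosDef := hpd.inv
  set Q : Matrix (Fin K) (Fin K) ℝ := (open scoped MatrixOrder in CFC.sqrt (P⁻¹)) with hQ
  have hQ2 : Q * Q = P⁻¹ := open scoped MatrixOrder in CFC.sqrt_mul_sqrt_self _ hpdi.posSemidef.nonneg
  have hQherm : Qᴴ = Q := open scoped MatrixOrder in (CFC.sqrt_nonneg (P⁻¹)).posSemidef.1
  have hQsym : Qᵀ = Q := by
    conv_rhs => rw [← hQherm]
    ext i j
    simp [Matrix.conjTranspose_apply]
  have hQdet : IsUnit Q.det := by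
    have h1 : IsUnit (P⁻¹).det := Matrix.isUnit_nonsing_inv_det P hdet
    rw [← hQ2, Matrix.det_mul] at h1
    exact isUnit_of_mul_isUnit_left h1
  have hQ2c : ∀ Z : Matrix (Fin K) (Fin K) ℝ, Q * (Q * Z) = P⁻¹ * Z := by
    intro Z; rw [← mul_assoc, hQ2]
  have hQQP : Q * (Q * P) = 1 := by rw [hQ2c, hPiP]
  have hsg2 : Real.sqrt g * Real.sqrt g = g := Real.mul_self_sqrt hg.le
  have hsgpos : 0 < Real.sqrt g := Real.sqrt_pos.2 hg
  have hsginv : Real.sqrt g * (Real.sqrt g)⁻¹ = 1 := mul_inv_cancel₀ hsgpos.ne'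
  have hsginv' : (Real.sqrt g)⁻¹ * Real.sqrt g = 1 := inv_mul_cancel₀ hsgpos.ne'
  -- the square-root factor of the symmetrizer
  set R3 : Matrix (Fin 3) (Fin 3) (Matrix (Fin K) (Fin K) ℝ) :=
    !![Real.sqrt g • 1, 0, 0;
       -(Q * U), Q, 0;
       -(Q * V), 0, Q] with hR3
  set Rinv3 : Matrix (Fin 3) (Fin 3) (Matrix (Fin K) (Fin K) ℝ) :=
    !![(Real.sqrt g)⁻¹ • 1, 0, 0;
       (Real.sqrt g)⁻¹ • U, Q * P, 0;
       (Real.sqrt g)⁻¹ • V, 0, Q * P] with hRinv3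
  set R0 : Matrix (Fin 3 × Fin K) (Fin 3 × Fin K) ℝ := block3 K R3 with hR0
  have hRR : R0 * block3 K Rinv3 = 1 := by
    rw [hR0, block3_mul, ← block3_one K]
    refine congrArg (block3 K) ?_
    refine Matrix.ext fun i j => ?_
    fin_cases i <;> fin_cases j <;>
      simp [hR3, hRinv3, Matrix.mul_apply, Fin.sum_univ_three, Matrix.one_apply,
        Matrix.smul_mul, Matrix.mul_smul, smul_smul, hsginv, hsginv', hQQP, mul_assoc]
  have hH : R0ᵀ * R0 = block3 K H3 := by
    rw [hR0, block3_transpose, block3_mul]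
    refine congrArg (block3 K) ?_
    refine Matrix.ext fun i j => ?_
    fin_cases i <;> fin_cases j <;>
      simp [hR3, hH3, Matrix.mul_apply, Fin.sum_univ_three, Matrix.transpose_neg,
        Matrix.transpose_mul, Matrix.transpose_smul, Matrix.transpose_one,
        hQsym, hUsym, hVsym, Matrix.smul_mul, Matrix.mul_smul, smul_smul,
        hsg2, hQ2c, hQ2, mul_assoc]
    all_goals
      simp only [smul_add, smul_sub, mul_add, add_mul, mul_sub, sub_mul, neg_mul, mul_neg,
        Matrix.smul_mul, Matrix.mul_smul, mul_assoc, hQ2c, hQ2, hsg2, smul_smul,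
        Matrix.mul_one, Matrix.one_mul, Matrix.mul_zero, Matrix.zero_mul, one_smul]
      try module
  -- invertibility of R0
  haveI : Invertible R0 := invertibleOfRightInverse _ _ hRR
  have hRdet : IsUnit R0.det := Matrix.isUnit_det_of_invertible R0
  have hRTdet : IsUnit R0ᵀ.det := by rwa [Matrix.det_transpose]
  have hRiR : R0⁻¹ * R0 = 1 := Matrix.nonsing_inv_mul R0 hRdet
  have hRRi : R0 * R0⁻¹ = 1 := Matrix.mul_nonsing_inv R0 hRdet
  -- the key intertwining identity
  have hkey : Aᵀ * (R0ᵀ * R0) = (R0ᵀ * R0) * A := by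
    rw [hH]
    calc Aᵀ * block3 K H3 = Aᵀ * (block3 K H3)ᵀ := by rw [hHsym]
      _ = (block3 K H3 * A)ᵀ := (Matrix.transpose_mul _ _).symm
      _ = block3 K H3 * A := hHA
  -- R0 * A * R0⁻¹ is symmetric
  have hMsym : (R0 * A * R0⁻¹)ᵀ = R0 * A * R0⁻¹ := by
    rw [Matrix.transpose_mul, Matrix.transpose_mul, Matrix.transpose_nonsing_inv]
    calc (R0ᵀ)⁻¹ * (Aᵀ * R0ᵀ)
        = (R0ᵀ)⁻¹ * (Aᵀ * (R0ᵀ * (R0 * R0⁻¹))) := by rw [hRRi, mul_one]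
      _ = (R0ᵀ)⁻¹ * ((Aᵀ * (R0ᵀ * R0)) * R0⁻¹) := by simp only [mul_assoc]
      _ = (R0ᵀ)⁻¹ * (((R0ᵀ * R0) * A) * R0⁻¹) := by rw [hkey]
      _ = ((R0ᵀ)⁻¹ * R0ᵀ) * (R0 * (A * R0⁻¹)) := by simp only [mul_assoc]
      _ = R0 * A * R0⁻¹ := by
          rw [Matrix.nonsing_inv_mul _ hRTdet, one_mul, mul_assoc]
  constructor
  · -- first statement : similar to a symmetric matrix
    refine ⟨R0⁻¹, Matrix.isUnit_nonsing_inv_det R0 hRdet, ?_⟩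
    rw [Matrix.nonsing_inv_nonsing_inv R0 hRdet]
    exact hMsym
  · -- second statement : diagonalizable
    have hMherm : (R0 * A * R0⁻¹).IsHermitian := by
      have e : (R0 * A * R0⁻¹)ᴴ = (R0 * A * R0⁻¹)ᵀ := by
        ext i j; simp [Matrix.conjTranspose_apply]
      rw [Matrix.IsHermitian, e]
      exact hMsym
    have spectral := hMherm.spectral_theorem
    set Uq : Matrix (Fin 3 × Fin K) (Fin 3 × Fin K) ℝ :=
      (hMherm.eigenvectorUnitary : Matrix (Fin 3 × Fin K) (Fin 3 × Fin K) ℝ) with hUq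
    have h1 : Uq * star Uq = 1 :=
      Matrix.mem_unitaryGroup_iff.mp (hMherm.eigenvectorUnitary).2
    have hUqdet : IsUnit Uq.det :=
      IsUnit.of_mul_eq_one _ (by rw [← Matrix.det_mul, h1, Matrix.det_one])
    have hUqinv : Uq⁻¹ = star Uq := Matrix.inv_eq_right_inv h1
    refine ⟨R0⁻¹ * Uq, Matrix.diagonal (RCLike.ofReal ∘ hMherm.eigenvalues), ?_,
      Matrix.isDiag_diagonal _, ?_⟩
    · rw [Matrix.det_mul]
      exact (Matrix.isUnit_nonsing_inv_det R0 hRdet).mul hUqdet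
    · have hinv : (R0⁻¹ * Uq)⁻¹ = star Uq * R0 := by
        rw [Matrix.mul_inv_rev, hUqinv, Matrix.nonsing_inv_nonsing_inv R0 hRdet]
      rw [hinv]
      have hback : R0⁻¹ * (R0 * A * R0⁻¹) * R0 = A := by
        calc R0⁻¹ * (R0 * A * R0⁻¹) * R0
            = (R0⁻¹ * R0) * (A * (R0⁻¹ * R0)) := by simp only [mul_assoc]
          _ = A := by rw [hRiR, mul_one, one_mul]
      calc A = R0⁻¹ * (R0 * A * R0⁻¹) * R0 := hback.symm
        _ = R0⁻¹ * (Uq * Matrix.diagonal (RCLike.ofReal ∘ hMherm.eigenvalues) * star Uq) * R0 :=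
            congrArg (fun Z => R0⁻¹ * Z * R0) spectral
        _ = R0⁻¹ * Uq * Matrix.diagonal (RCLike.ofReal ∘ hMherm.eigenvalues) * (star Uq * R0) := by
            simp only [mul_assoc]
end

section
/- Let (Ω, μ) be a measure space, K ≥ 1, and φ_1, …, φ_K : Ω → ℝ measurable functions such that every triple product φ_k φ_ℓ φ_m is μ-integrable and the family is orthonormal: ∫ φ_k φ_ℓ dμ = δ_{kℓ} for all k, ℓ. Let M ≥ 1, let ξ_1, …, ξ_M ∈ Ω and τ_1, …, τ_M > 0 be quadrature nodes and weights such that for all indices k, ℓ, m: ∫ φ_k φ_ℓ φ_m dμ = Σ_{j=1}^M τ_j φ_k(ξ_j) φ_ℓ(ξ_j) φ_m(ξ_j), and for all k, ℓ: ∫ φ_k φ_ℓ dμ = Σ_{j=1}^M τ_j φ_k(ξ_j) φ_ℓ(ξ_j). Let ĥ ∈ ℝ^K satisfy Σ_k ĥ_k φ_k(ξ_j) > 0 for every j = 1, …, M. Then the K×K matrix 𝒫(ĥ) with entries 𝒫(ĥ)_{ℓ,m} = Σ_k ĥ_k ∫ φ_k φ_ℓ φ_m dμ is symmetric positive definite.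 -/
open Matrix BigOperators MeasureTheory

theorem galerkin_matrix_posdef_of_quadrature_positivity
    (Ω : Type) [MeasurableSpace Ω] (μ : Measure Ω)
    (K : ℕ) (hK : 1 ≤ K)
    (φ : Fin K → Ω → ℝ)
    (hmeas : ∀ k, Measurable (φ k))
    (hint : ∀ k ℓ m, Integrable (fun ω => φ k ω * φ ℓ ω * φ m ω) μ)
    (horth : ∀ k ℓ, (∫ ω, φ k ω * φ ℓ ω ∂μ) = if k = ℓ then (1 : ℝ) else 0)
    (M : ℕ) (hM : 1 ≤ M)
    (ξ : Fin M → Ω) (τ : Fin M → ℝ) (hτ : ∀ j, 0 < τ j)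
    (hquad3 : ∀ k ℓ m, (∫ ω, φ k ω * φ ℓ ω * φ m ω ∂μ) =
      ∑ j, τ j * (φ k (ξ j) * φ ℓ (ξ j) * φ m (ξ j)))
    (hquad2 : ∀ k ℓ, (∫ ω, φ k ω * φ ℓ ω ∂μ) =
      ∑ j, τ j * (φ k (ξ j) * φ ℓ (ξ j)))
    (h : Fin K → ℝ)
    (hpos : ∀ j, 0 < ∑ k, h k * φ k (ξ j))
    (P : Matrix (Fin K) (Fin K) ℝ)
    (hP : P = Matrix.of fun ℓ m => ∑ k, h k * ∫ ω, φ k ω * φ ℓ ω * φ m ω ∂μ) :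
    P.PosDef := by
  subst hP
  -- abbreviate the nodal values of the water height
  set H : Fin M → ℝ := fun j => ∑ k, h k * φ k (ξ j) with hH
  have hHpos : ∀ j, 0 < H j := hpos
  -- entrywise quadrature formula
  have entry : ∀ ℓ m : Fin K,
      (∑ k, h k * ∫ ω, φ k ω * φ ℓ ω * φ m ω ∂μ) =
      ∑ j, τ j * H j * (φ ℓ (ξ j) * φ m (ξ j)) := by
    intro ℓ m
    simp only [hquad3, Finset.mul_sum, Finset.sum_mul, hH]
    rw [Finset.sum_comm]
    refine Finset.sum_congr rfl fun j _ =>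
      Finset.sum_congr rfl fun k _ => by ring
  rw [posDef_iff_dotProduct_mulVec]
  constructor
  · -- Hermitian
    ext ℓ m
    simp only [conjTranspose_apply, of_apply, star_trivial]
    refine Finset.sum_congr rfl fun k _ => ?_
    congr 1
    congr 1
    funext ω
    ring
  · intro x hx
    have hsx : star x = x := star_trivial x
    have key1 : x ⬝ᵥ ((Matrix.of fun ℓ m => ∑ k, h k * ∫ ω, φ k ω * φ ℓ ω * φ m ω ∂μ) *ᵥ x)
        = ∑ j, τ j * H j * (∑ ℓ, x ℓ * φ ℓ (ξ j))^2 := by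
      simp only [dotProduct, mulVec, of_apply, entry]
      calc ∑ ℓ, x ℓ * ∑ m, (∑ j, τ j * H j * (φ ℓ (ξ j) * φ m (ξ j))) * x m
          = ∑ ℓ, ∑ m, ∑ j, x ℓ * x m * (τ j * H j * (φ ℓ (ξ j) * φ m (ξ j))) := by
            simp only [Finset.mul_sum, Finset.sum_mul]
            exact Finset.sum_congr rfl fun ℓ _ => Finset.sum_congr rfl fun m _ =>
              Finset.sum_congr rfl fun j _ => by ring
        _ = ∑ ℓ, ∑ j, ∑ m, x ℓ * x m * (τ j * H j * (φ ℓ (ξ j) * φ m (ξ j))) :=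
            Finset.sum_congr rfl fun ℓ _ => Finset.sum_comm
        _ = ∑ j, ∑ ℓ, ∑ m, x ℓ * x m * (τ j * H j * (φ ℓ (ξ j) * φ m (ξ j))) :=
            Finset.sum_comm
        _ = ∑ j, τ j * H j * (∑ ℓ, x ℓ * φ ℓ (ξ j))^2 := by
            refine Finset.sum_congr rfl fun j _ => ?_
            rw [sq]
            simp only [Finset.mul_sum, Finset.sum_mul]
            exact Finset.sum_congr rfl fun ℓ _ =>
              Finset.sum_congr rfl fun m _ => by ring
    have key2 : ∑ j, τ j * (∑ ℓ, x ℓ * φ ℓ (ξ j))^2 = ∑ ℓ, (x ℓ)^2 := by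
      calc ∑ j, τ j * (∑ ℓ, x ℓ * φ ℓ (ξ j))^2
          = ∑ j, ∑ ℓ, ∑ m, x ℓ * x m * (τ j * (φ ℓ (ξ j) * φ m (ξ j))) := by
            refine Finset.sum_congr rfl fun j _ => ?_
            rw [sq]
            simp only [Finset.mul_sum, Finset.sum_mul]
            exact Finset.sum_congr rfl fun ℓ _ =>
              Finset.sum_congr rfl fun m _ => by ring
        _ = ∑ ℓ, ∑ j, ∑ m, x ℓ * x m * (τ j * (φ ℓ (ξ j) * φ m (ξ j))) :=
            Finset.sum_comm
        _ = ∑ ℓ, ∑ m, ∑ j, x ℓ * x m * (τ j * (φ ℓ (ξ j) * φ m (ξ j))) :=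
            Finset.sum_congr rfl fun ℓ _ => Finset.sum_comm
        _ = ∑ ℓ, ∑ m, x ℓ * x m * ∑ j, τ j * (φ ℓ (ξ j) * φ m (ξ j)) := by
            simp only [Finset.mul_sum]
        _ = ∑ ℓ, ∑ m, x ℓ * x m * (if ℓ = m then (1:ℝ) else 0) := by
            simp only [← hquad2, horth]
        _ = ∑ ℓ, (x ℓ)^2 := by
            simp [mul_ite, Finset.sum_ite_eq, sq]
    have hxpos : 0 < ∑ ℓ, (x ℓ)^2 := by
      obtain ⟨ℓ0, hℓ0⟩ : ∃ ℓ, x ℓ ≠ 0 := Function.ne_iff.mp hx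
      exact Finset.sum_pos' (fun ℓ _ => sq_nonneg _)
        ⟨ℓ0, Finset.mem_univ _, by positivity⟩
    have hex : ∃ j, (∑ ℓ, x ℓ * φ ℓ (ξ j)) ≠ 0 := by
      by_contra hc
      push_neg at hc
      rw [← key2] at hxpos
      simp [hc] at hxpos
    obtain ⟨j0, hj0⟩ := hex
    rw [hsx, key1]
    refine Finset.sum_pos' (fun j _ => ?_) ⟨j0, Finset.mem_univ _, ?_⟩
    · have h1 := (hτ j).le
      have h2 := (hHpos j).le
      positivity
    · have h1 := hτ j0
      have h2 := hHpos j0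
      positivity
end

section
/- Let (Ω, μ) be a measure space, K ≥ 1, and φ_1, …, φ_K : Ω → ℝ measurable functions such that every triple product φ_k φ_ℓ φ_m is μ-integrable and the family is orthonormal: ∫ φ_k φ_ℓ dμ = δ_{kℓ}. Let ξ_1, …, ξ_M ∈ Ω and τ_1, …, τ_M > 0 satisfy, for all k, ℓ, m: ∫ φ_k φ_ℓ φ_m dμ = Σ_j τ_j φ_k(ξ_j) φ_ℓ(ξ_j) φ_m(ξ_j), and for all k, ℓ: ∫ φ_k φ_ℓ dμ = Σ_j τ_j φ_k(ξ_j) φ_ℓ(ξ_j). For a ∈ ℝ^K let 𝒫(a) be the K×K matrix with 𝒫(a)_{ℓ,m} = Σ_k a_k ∫ φ_k φ_ℓ φ_m dμ. Let g > 0 and let ĥ, q̂ˣ, q̂ʸ ∈ ℝ^K with Σ_k ĥ_k φ_k(ξ_j) > 0 for every j. Then 𝒫(ĥ) is invertible, and, setting û = 𝒫(ĥ)⁻¹ q̂ˣ, v̂ = 𝒫(ĥ)⁻¹ q̂ʸ, X = 𝒫(q̂ˣ)𝒫(ĥ)⁻¹, Y = 𝒫(q̂ʸ)𝒫(ĥ)⁻¹,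 the 3K×3K matrices J_F = [[0, I, 0], [g𝒫(ĥ) − X𝒫(û), X + 𝒫(û), 0], [−X𝒫(v̂), 𝒫(v̂), X]] and J_G = [[0, 0, I], [−Y𝒫(û), Y, 𝒫(û)], [g𝒫(ĥ) − Y𝒫(v̂), 0, Y + 𝒫(v̂)]] satisfy: for every n_x, n_y ∈ ℝ with n_x² + n_y² = 1, the matrix n_x J_F + n_y J_G is similar over ℝ to a real symmetric matrix, hence diagonalizable with real eigenvalues. -/
open Matrix BigOperators MeasureTheory

namespace SGaux

lemma block3_mul (K : ℕ) (M N : Matrix (Fin 3) (Fin 3) (Matrix (Fin K) (Fin K) ℝ)) :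
    block3 K M * block3 K N = block3 K (M * N) := by
  ext ⟨i, k⟩ ⟨j, l⟩
  simp [block3, Matrix.mul_apply, Fintype.sum_prod_type, Matrix.sum_apply]

lemma block3_smul (K : ℕ) (c : ℝ) (M : Matrix (Fin 3) (Fin 3) (Matrix (Fin K) (Fin K) ℝ)) :
    c • block3 K M = block3 K (c • M) := rfl

lemma block3_add (K : ℕ) (M N : Matrix (Fin 3) (Fin 3) (Matrix (Fin K) (Fin K) ℝ)) :
    block3 K M + block3 K N = block3 K (M + N) := rfl

lemma block3_one (K : ℕ) : block3 K 1 = 1 := by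
  ext ⟨i, k⟩ ⟨j, l⟩
  by_cases hij : i = j <;> by_cases hkl : k = l <;>
    simp [block3, Matrix.one_apply, Prod.ext_iff, hij, hkl]

lemma block3_isSymm (K : ℕ) (M : Matrix (Fin 3) (Fin 3) (Matrix (Fin K) (Fin K) ℝ))
    (h : ∀ i j, (M i j)ᵀ = M j i) : (block3 K M).IsSymm := by
  ext ⟨i, k⟩ ⟨j, l⟩
  have := congrFun (congrFun (h j i) k) l
  simpa [block3, Matrix.transpose_apply] using this

lemma quad {Mn Kn : ℕ} (c : Fin Mn → ℝ) (x : Fin Kn → ℝ) (b : Fin Mn → Fin Kn → ℝ) :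
    ∑ ℓ, x ℓ * ∑ m, (∑ j, c j * (b j ℓ * b j m)) * x m
      = ∑ j, c j * (∑ ℓ, x ℓ * b j ℓ) ^ 2 := by
  have h1 : ∀ ℓ, x ℓ * ∑ m, (∑ j, c j * (b j ℓ * b j m)) * x m
      = ∑ j, ∑ m, c j * (x ℓ * b j ℓ * (x m * b j m)) := by
    intro ℓ
    rw [Finset.mul_sum]
    have h2 : ∀ m ∈ Finset.univ, x ℓ * ((∑ j, c j * (b j ℓ * b j m)) * x m)
        = ∑ j, c j * (x ℓ * b j ℓ * (x m * b j m)) := by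
      intro m _
      rw [Finset.sum_mul, Finset.mul_sum]
      exact Finset.sum_congr rfl fun j _ => by ring
    rw [Finset.sum_congr rfl h2]
    exact Finset.sum_comm
  calc ∑ ℓ, x ℓ * ∑ m, (∑ j, c j * (b j ℓ * b j m)) * x m
      = ∑ ℓ, ∑ j, ∑ m, c j * (x ℓ * b j ℓ * (x m * b j m)) :=
        Finset.sum_congr rfl fun ℓ _ => h1 ℓ
    _ = ∑ j, ∑ ℓ, ∑ m, c j * (x ℓ * b j ℓ * (x m * b j m)) := Finset.sum_comm
    _ = ∑ j, c j * (∑ ℓ, x ℓ * b j ℓ) ^ 2 := by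
        refine Finset.sum_congr rfl fun j _ => ?_
        rw [sq, Finset.sum_mul_sum]
        simp only [Finset.mul_sum]

lemma isHermitian_of_transpose {n : Type*} [Fintype n] {A : Matrix n n ℝ} (h : Aᵀ = A) :
    A.IsHermitian := by
  ext i j
  simpa [Matrix.conjTranspose_apply] using congrFun (congrFun h i) j

end SGaux

set_option maxHeartbeats 1600000 in
theorem sg_swe_hyperbolic_of_quadrature_positivity
    (Ω : Type) [MeasurableSpace Ω] (μ : Measure Ω)
    (K : ℕ) (hK : 1 ≤ K)
    (φ : Fin K → Ω → ℝ)
    (hmeas : ∀ k, Measurable (φ k))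
    (hint : ∀ k ℓ m, Integrable (fun ω => φ k ω * φ ℓ ω * φ m ω) μ)
    (horth : ∀ k ℓ, (∫ ω, φ k ω * φ ℓ ω ∂μ) = if k = ℓ then (1 : ℝ) else 0)
    (M : ℕ) (hM : 1 ≤ M)
    (ξ : Fin M → Ω) (τ : Fin M → ℝ) (hτ : ∀ j, 0 < τ j)
    (hquad3 : ∀ k ℓ m, (∫ ω, φ k ω * φ ℓ ω * φ m ω ∂μ) =
      ∑ j, τ j * (φ k (ξ j) * φ ℓ (ξ j) * φ m (ξ j)))
    (hquad2 : ∀ k ℓ, (∫ ω, φ k ω * φ ℓ ω ∂μ) =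
      ∑ j, τ j * (φ k (ξ j) * φ ℓ (ξ j)))
    (P : (Fin K → ℝ) → Matrix (Fin K) (Fin K) ℝ)
    (hPdef : ∀ a, P a =
      Matrix.of fun ℓ m => ∑ k, a k * ∫ ω, φ k ω * φ ℓ ω * φ m ω ∂μ)
    (g : ℝ) (hg : 0 < g)
    (h qx qy : Fin K → ℝ)
    (hpos : ∀ j, 0 < ∑ k, h k * φ k (ξ j))
    (u v : Fin K → ℝ)
    (hu : u = (P h)⁻¹ *ᵥ qx)
    (hv : v = (P h)⁻¹ *ᵥ qy)
    (X Y : Matrix (Fin K) (Fin K) ℝ)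
    (hX : X = P qx * (P h)⁻¹)
    (hY : Y = P qy * (P h)⁻¹)
    (JF JG : Matrix (Fin 3 × Fin K) (Fin 3 × Fin K) ℝ)
    (hJF : JF = block3 K
      !![(0 : Matrix (Fin K) (Fin K) ℝ), 1, 0;
         g • P h - X * P u, X + P u, 0;
         -(X * P v), P v, X])
    (hJG : JG = block3 K
      !![(0 : Matrix (Fin K) (Fin K) ℝ), 0, 1;
         -(Y * P u), Y, P u;
         g • P h - Y * P v, 0, Y + P v]) :
    IsUnit (P h).det ∧
    ∀ nx ny : ℝ, nx ^ 2 + ny ^ 2 = 1 →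
      (∃ S : Matrix (Fin 3 × Fin K) (Fin 3 × Fin K) ℝ,
          IsUnit S.det ∧ (S⁻¹ * (nx • JF + ny • JG) * S).IsSymm) ∧
      (∃ S D : Matrix (Fin 3 × Fin K) (Fin 3 × Fin K) ℝ,
          IsUnit S.det ∧ D.IsDiag ∧ nx • JF + ny • JG = S * D * S⁻¹) := by
  -- symmetry of the triple-product integral in its last two arguments
  have hsym3 : ∀ k ℓ m : Fin K,
      (∫ ω, φ k ω * φ ℓ ω * φ m ω ∂μ) = ∫ ω, φ k ω * φ m ω * φ ℓ ω ∂μ := by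
    intro k ℓ m
    congr 1
    funext ω
    ring
  -- each Galerkin matrix is symmetric
  have hPsymm : ∀ a, (P a)ᵀ = P a := by
    intro a
    rw [hPdef]
    ext ℓ m
    simp only [Matrix.transpose_apply, Matrix.of_apply]
    exact Finset.sum_congr rfl fun k _ => by rw [hsym3 k m ℓ]
  -- quadrature representation of the Galerkin matrix
  have hPapply : ∀ (a : Fin K → ℝ) ℓ m, P a ℓ m
      = ∑ j, (τ j * ∑ k, a k * φ k (ξ j)) * (φ ℓ (ξ j) * φ m (ξ j)) := by
    intro a ℓ m
    rw [hPdef]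
    simp only [Matrix.of_apply, hquad3, Finset.mul_sum]
    rw [Finset.sum_comm]
    refine Finset.sum_congr rfl fun j _ => ?_
    rw [Finset.sum_mul]
    exact Finset.sum_congr rfl fun k _ => by ring
  -- positive definiteness of P h
  have hPD : (P h).PosDef := by
    refine Matrix.PosDef.of_dotProduct_mulVec_pos (SGaux.isHermitian_of_transpose (hPsymm h)) fun x hx => ?_
    have hstar : star x = x := funext fun i => rfl
    have hdot : x ⬝ᵥ (P h *ᵥ x)
        = ∑ j, (τ j * ∑ k, h k * φ k (ξ j)) * (∑ ℓ, x ℓ * φ ℓ (ξ j)) ^ 2 := by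
      simp only [dotProduct, Matrix.mulVec, hPapply h]
      exact SGaux.quad (fun j => τ j * ∑ k, h k * φ k (ξ j)) x (fun j ℓ => φ ℓ (ξ j))
    have hxx : (∑ ℓ, x ℓ * x ℓ) = ∑ j, τ j * (∑ ℓ, x ℓ * φ ℓ (ξ j)) ^ 2 := by
      have e1 : ∀ ℓ m : Fin K,
          (∑ j, τ j * (φ ℓ (ξ j) * φ m (ξ j))) = if ℓ = m then (1 : ℝ) else 0 := by
        intro ℓ m
        rw [← hquad2, horth]
      have e2 : ∀ ℓ, x ℓ = ∑ m, (∑ j, τ j * (φ ℓ (ξ j) * φ m (ξ j))) * x m := by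
        intro ℓ
        simp [e1, ite_mul, Finset.sum_ite_eq]
      calc (∑ ℓ, x ℓ * x ℓ)
          = ∑ ℓ, x ℓ * ∑ m, (∑ j, τ j * (φ ℓ (ξ j) * φ m (ξ j))) * x m :=
            Finset.sum_congr rfl fun ℓ _ => by rw [← e2 ℓ]
        _ = ∑ j, τ j * (∑ ℓ, x ℓ * φ ℓ (ξ j)) ^ 2 := SGaux.quad τ x (fun j ℓ => φ ℓ (ξ j))
    have hxpos : 0 < ∑ ℓ, x ℓ * x ℓ := by
      obtain ⟨ℓ0, hl⟩ : ∃ ℓ, x ℓ ≠ 0 := Function.ne_iff.mp hx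
      exact Finset.sum_pos' (fun ℓ _ => mul_self_nonneg _)
        ⟨ℓ0, Finset.mem_univ _, mul_self_pos.mpr hl⟩
    have hjex : ∃ j0, (∑ ℓ, x ℓ * φ ℓ (ξ j0)) ≠ 0 := by
      by_contra hc
      push_neg at hc
      rw [hxx] at hxpos
      simp [hc] at hxpos
    obtain ⟨j0, hj0⟩ := hjex
    rw [hstar, hdot]
    refine Finset.sum_pos' (fun j _ => ?_) ⟨j0, Finset.mem_univ _, ?_⟩
    · exact mul_nonneg (le_of_lt (mul_pos (hτ j) (hpos j))) (sq_nonneg _)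
    · have hd2 : 0 < (∑ ℓ, x ℓ * φ ℓ (ξ j0)) ^ 2 := by
        rw [pow_two]; exact mul_self_pos.mpr hj0
      exact mul_pos (mul_pos (hτ j0) (hpos j0)) hd2
  have hdetH : IsUnit (P h).det := isUnit_iff_ne_zero.mpr hPD.det_pos.ne'
  refine ⟨hdetH, ?_⟩
  intro nx ny _
  -- square root of P h
  open scoped MatrixOrder in
  set R : Matrix (Fin K) (Fin K) ℝ := CFC.sqrt (P h) with hRdef
  open scoped MatrixOrder in
  have hRR : R * R = P h := CFC.sqrt_mul_sqrt_self (P h) hPD.posSemidef.nonneg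
  open scoped MatrixOrder in
  have hRsym : Rᵀ = R := by
    ext i j
    simpa [Matrix.conjTranspose_apply] using
      congrFun (congrFun (CFC.sqrt_nonneg (P h)).posSemidef.isHermitian i) j
  have hRdet : IsUnit R.det := by
    have hdd : R.det * R.det = (P h).det := by rw [← Matrix.det_mul, hRR]
    refine isUnit_iff_ne_zero.mpr fun h0 => hPD.det_pos.ne' ?_
    rw [← hdd, h0, mul_zero]
  have hRRi : R * R⁻¹ = 1 := Matrix.mul_nonsing_inv _ hRdet
  have hRiR : R⁻¹ * R = 1 := Matrix.nonsing_inv_mul _ hRdet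
  have hsg : Real.sqrt g * Real.sqrt g = g := Real.mul_self_sqrt hg.le
  have hsg0 : Real.sqrt g ≠ 0 := by positivity
  set F : Matrix (Fin K) (Fin K) ℝ := Real.sqrt g • R with hFdef
  set Fi : Matrix (Fin K) (Fin K) ℝ := (Real.sqrt g)⁻¹ • R⁻¹ with hFidef
  have hFF : F * F = g • P h := by
    rw [hFdef, smul_mul_smul_comm, hsg, hRR]
  have hFFi : F * Fi = 1 := by
    rw [hFdef, hFidef, smul_mul_smul_comm, mul_inv_cancel₀ hsg0, hRRi, one_smul]
  have hFiF : Fi * F = 1 := by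
    rw [hFdef, hFidef, smul_mul_smul_comm, inv_mul_cancel₀ hsg0, hRiR, one_smul]
  have hFsym : Fᵀ = F := by rw [hFdef, Matrix.transpose_smul, hRsym]
  have hFisym : Fiᵀ = Fi := by
    rw [hFidef, Matrix.transpose_smul, Matrix.transpose_nonsing_inv, hRsym]
  -- auxiliary matrices
  set W : Matrix (Fin K) (Fin K) ℝ := nx • X + ny • Y with hWdef
  set Nm : Matrix (Fin K) (Fin K) ℝ := nx • P u + ny • P v with hNdef
  have hNs : Nmᵀ = Nm := by
    rw [hNdef, Matrix.transpose_add, Matrix.transpose_smul, Matrix.transpose_smul,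
      hPsymm u, hPsymm v]
  have hXH : X * P h = P qx := by
    rw [hX, Matrix.mul_assoc, Matrix.nonsing_inv_mul _ hdetH, Matrix.mul_one]
  have hYH : Y * P h = P qy := by
    rw [hY, Matrix.mul_assoc, Matrix.nonsing_inv_mul _ hdetH, Matrix.mul_one]
  have hWH : W * P h = P h * Wᵀ := by
    have h1 : W * P h = nx • P qx + ny • P qy := by
      rw [hWdef, Matrix.add_mul, smul_mul_assoc, smul_mul_assoc, hXH, hYH]
    have h2 : (W * P h)ᵀ = W * P h := by
      rw [h1, Matrix.transpose_add, Matrix.transpose_smul, Matrix.transpose_smul,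
        hPsymm qx, hPsymm qy]
    conv_lhs => rw [← h2]
    rw [Matrix.transpose_mul, hPsymm h]
  set W' : Matrix (Fin K) (Fin K) ℝ := Fi * (W * F) with hW'def
  have hFW' : F * W' = W * F := by
    rw [hW'def, ← Matrix.mul_assoc, hFFi, Matrix.one_mul]
  have hW'F : W' * F = F * Wᵀ := by
    have c1 : W' * F = Fi * (W * (F * F)) := by
      rw [hW'def, Matrix.mul_assoc, Matrix.mul_assoc]
    have c2 : W * (F * F) = (F * F) * Wᵀ := by
      rw [hFF, mul_smul_comm, smul_mul_assoc, hWH]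
    rw [c1, c2, ← Matrix.mul_assoc, ← Matrix.mul_assoc, hFiF, Matrix.one_mul]
  have hW's : W'ᵀ = W' := by
    have h1 : W'ᵀ = F * Wᵀ * Fi := by
      rw [hW'def, Matrix.transpose_mul, Matrix.transpose_mul, hFsym, hFisym,
        Matrix.mul_assoc]
    rw [h1, ← hW'F, Matrix.mul_assoc, hFFi, Matrix.mul_one]
  -- the block matrices
  set Ab : Matrix (Fin 3) (Fin 3) (Matrix (Fin K) (Fin K) ℝ) :=
    !![0, nx • (1 : Matrix (Fin K) (Fin K) ℝ), ny • 1;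
       (nx * g) • P h - W * P u, W + nx • P u, ny • P u;
       -(W * P v) + (ny * g) • P h, nx • P v, W + ny • P v] with hAbdef
  set Sb : Matrix (Fin 3) (Fin 3) (Matrix (Fin K) (Fin K) ℝ) :=
    !![1, 0, 0; P u, F, 0; P v, 0, F] with hSbdef
  set Sbi : Matrix (Fin 3) (Fin 3) (Matrix (Fin K) (Fin K) ℝ) :=
    !![1, 0, 0; -(Fi * P u), Fi, 0; -(Fi * P v), 0, Fi] with hSbidef
  set Cb : Matrix (Fin 3) (Fin 3) (Matrix (Fin K) (Fin K) ℝ) :=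
    !![Nm, nx • F, ny • F; nx • F, W', 0; ny • F, 0, W'] with hCbdef
  have hA : nx • JF + ny • JG = block3 K Ab := by
    rw [hJF, hJG, SGaux.block3_smul, SGaux.block3_smul, SGaux.block3_add]
    refine congrArg (block3 K) ?_
    refine Matrix.ext fun i j => ?_
    fin_cases i <;> fin_cases j <;>
      simp [hAbdef, hWdef, smul_add, smul_sub, smul_neg, smul_smul, smul_zero,
        add_mul, smul_mul_assoc] <;>
      module
  have hSS : Sb * Sbi = 1 := by
    rw [hSbdef, hSbidef, Matrix.mul_fin_three, Matrix.one_fin_three]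
    refine Matrix.ext fun i j => ?_
    fin_cases i <;> fin_cases j <;>
      simp [mul_neg, ← Matrix.mul_assoc, hFFi]
  have hmain : Ab * Sb = Sb * Cb := by
    rw [hAbdef, hSbdef, hCbdef, Matrix.mul_fin_three, Matrix.mul_fin_three]
    refine Matrix.ext fun i j => ?_
    fin_cases i <;> fin_cases j <;> simp <;>
      simp only [hNdef, add_mul, mul_add, sub_mul, mul_sub, neg_mul, mul_neg,
        smul_mul_assoc, mul_smul_comm, hFF, hFW', smul_smul, smul_add,
        smul_sub, smul_neg, smul_zero] <;>
      module
  have hSright : block3 K Sb * block3 K Sbi = 1 := by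
    rw [SGaux.block3_mul, hSS, SGaux.block3_one]
  have hSdet : IsUnit (block3 K Sb).det := Matrix.isUnit_det_of_right_inverse hSright
  have hASC : (nx • JF + ny • JG) * block3 K Sb = block3 K Sb * block3 K Cb := by
    rw [hA, SGaux.block3_mul, SGaux.block3_mul, hmain]
  have hconj : (block3 K Sb)⁻¹ * (nx • JF + ny • JG) * block3 K Sb = block3 K Cb := by
    rw [Matrix.mul_assoc, hASC, ← Matrix.mul_assoc, Matrix.nonsing_inv_mul _ hSdet,
      Matrix.one_mul]
  have hCsym : (block3 K Cb).IsSymm := by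
    apply SGaux.block3_isSymm
    intro i j
    fin_cases i <;> fin_cases j <;>
      simp [hCbdef, Matrix.transpose_smul, hFsym, hNs, hW's]
  refine ⟨⟨block3 K Sb, hSdet, by rw [hconj]; exact hCsym⟩, ?_⟩
  have hCh : (block3 K Cb).IsHermitian := SGaux.isHermitian_of_transpose hCsym
  set Uu : Matrix (Fin 3 × Fin K) (Fin 3 × Fin K) ℝ :=
    (hCh.eigenvectorUnitary : Matrix (Fin 3 × Fin K) (Fin 3 × Fin K) ℝ) with hUudef
  have hUstar : Uu * star Uu = 1 := Matrix.mem_unitaryGroup_iff.mp hCh.eigenvectorUnitary.2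
  have hUinv : Uu⁻¹ = star Uu := Matrix.inv_eq_right_inv hUstar
  have hUdet : IsUnit Uu.det := Matrix.isUnit_det_of_right_inverse hUstar
  have hspec := hCh.spectral_theorem
  rw [Unitary.conjStarAlgAut_apply, ← hUudef] at hspec
  have hAeq : nx • JF + ny • JG = block3 K Sb * block3 K Cb * (block3 K Sb)⁻¹ := by
    calc nx • JF + ny • JG
        = (nx • JF + ny • JG) * (block3 K Sb * (block3 K Sb)⁻¹) := by
          rw [Matrix.mul_nonsing_inv _ hSdet, Matrix.mul_one]
      _ = ((nx • JF + ny • JG) * block3 K Sb) * (block3 K Sb)⁻¹ := by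
          rw [Matrix.mul_assoc]
      _ = block3 K Sb * block3 K Cb * (block3 K Sb)⁻¹ := by rw [hASC]
  refine ⟨block3 K Sb * Uu, Matrix.diagonal (RCLike.ofReal ∘ hCh.eigenvalues), ?_,
    Matrix.isDiag_diagonal _, ?_⟩
  · rw [Matrix.det_mul]; exact hSdet.mul hUdet
  · rw [Matrix.mul_inv_rev, hUinv]
    calc nx • JF + ny • JG
        = block3 K Sb * block3 K Cb * (block3 K Sb)⁻¹ := hAeq
      _ = block3 K Sb * (Uu * Matrix.diagonal (RCLike.ofReal ∘ hCh.eigenvalues) * star Uu)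
            * (block3 K Sb)⁻¹ :=
          congrArg (fun Z => block3 K Sb * Z * (block3 K Sb)⁻¹) hspec
      _ = block3 K Sb * Uu * Matrix.diagonal (RCLike.ofReal ∘ hCh.eigenvalues)
            * (star Uu * (block3 K Sb)⁻¹) := by
          simp only [Matrix.mul_assoc]
end

section
/- Let (Ω, μ) be a measure space, K ≥ 1, and φ_1, …, φ_K : Ω → ℝ measurable functions such that every triple product φ_k φ_ℓ φ_m is μ-integrable, the family is orthonormal (∫ φ_k φ_ℓ dμ = δ_{kℓ}), and φ_1 is the constant function 1 on Ω. Let ĥ ∈ ℝ^K and let 𝒫(ĥ) be the K×K matrix with entries 𝒫(ĥ)_{ℓ,m} = Σ_k ĥ_k ∫ φ_k φ_ℓ φ_m dμ. If 𝒫(ĥ) is positive definite, then ĥ_1 > 0. -/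
open Matrix BigOperators MeasureTheory

theorem mean_height_pos_of_galerkin_posdef
    (Ω : Type) [MeasurableSpace Ω] (μ : Measure Ω)
    (K : ℕ) (hK : 1 ≤ K)
    (φ : Fin K → Ω → ℝ)
    (hmeas : ∀ k, Measurable (φ k))
    (hint : ∀ k ℓ m, Integrable (fun ω => φ k ω * φ ℓ ω * φ m ω) μ)
    (horth : ∀ k ℓ, (∫ ω, φ k ω * φ ℓ ω ∂μ) = if k = ℓ then (1 : ℝ) else 0)
    (hφ1 : φ ⟨0, hK⟩ = fun _ => (1 : ℝ))
    (h : Fin K → ℝ)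
    (P : Matrix (Fin K) (Fin K) ℝ)
    (hP : P = Matrix.of fun ℓ m => ∑ k, h k * ∫ ω, φ k ω * φ ℓ ω * φ m ω ∂μ)
    (hpd : P.PosDef) :
    0 < h ⟨0, hK⟩ := by
  set i : Fin K := ⟨0, hK⟩
  have hx : (Pi.single i 1 : Fin K → ℝ) ≠ 0 := by
    intro hc
    have := congrFun hc i
    simp at this
  have hq := hpd.dotProduct_mulVec_pos hx
  have hquad : (Pi.single i 1 : Fin K → ℝ) ⬝ᵥ P.mulVec (Pi.single i 1) = P i i := by
    simp [dotProduct, Matrix.mulVec, Pi.single_apply]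
  have hPii : P i i = h i := by
    rw [hP]
    simp only [Matrix.of_apply, hφ1]
    have : ∀ k, (∫ ω, φ k ω * 1 * 1 ∂μ) = if k = i then (1 : ℝ) else 0 := by
      intro k
      have := horth k i
      rw [hφ1] at this
      simpa using this
    simp only [this]
    simp [Finset.sum_ite_eq']
  rw [star_trivial, hquad, hPii] at hq
  exact hq
end
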